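/- arXiv:2111.07974 — 2 statements merged into one kernel-verified Lean document; each statement's English description precedes it below -/
import Mathlib

section
/- There is a universal constant c₀ such that the following holds. Let H be a digraph with nonnegative edge lengths on n ≥ 2 vertices, let Δ > 0, let Q be a shortest path in H of length at most Δ, and let C be the random cutset produced by procedure Path-Quasipartition(H,Q,Δ). Then with probability 1, for all x,y ∈ V(H): if there exists a directed path P from x to y in H∖C that shares at least one vertex with Q, then d_H(x,y) ≤ c₀·Δ·log n. -/
open scoped ENNReal NNReal
open MeasureTheory

/-- A digraph on a vertex type `V`: an adjacency (edge) relation together with a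
nonnegative length for each edge. -/
structure WDigraph (V : Type) where
  Adj : V → V → Prop
  len : V → V → ℝ≥0

namespace WDigraph

variable {V : Type}

/-- `G.IsWalk u v p` : `p` is the list of vertices of a directed walk from `u` to `v` in `G`. -/
def IsWalk (G : WDigraph V) (u v : V) (p : List V) : Prop :=
  p.Chain' G.Adj ∧ p.head? = some u ∧ p.getLast? = some v

/-- The total length of a walk, given by its list of vertices. -/
def walkLen (G : WDigraph V) (p : List V) : ℝ≥0 :=
  ((p.zip p.tail).map fun e => G.len e.1 e.2).sum

/-- The shortest-path quasimetric of `G`. -/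
noncomputable def dist (G : WDigraph V) (u v : V) : ℝ≥0∞ :=
  ⨅ (p : List V) (_ : G.IsWalk u v p), (G.walkLen p : ℝ≥0∞)

/-- `v` is reachable from `u` in `G` after deleting the edges in `F`. -/
def ReachAvoiding (G : WDigraph V) (F : Set (V × V)) (u v : V) : Prop :=
  ∃ p : List V, G.IsWalk u v p ∧ ∀ e ∈ p.zip p.tail, e ∉ F

/-- The ball of radius `ρ` (a real number) around `v`. -/
noncomputable def ball (G : WDigraph V) (v : V) (ρ : ℝ) : Set V :=
  {u | G.dist v u ≤ ENNReal.ofReal ρ}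

/-- The reverse digraph, obtained by reversing every edge. -/
def rev (G : WDigraph V) : WDigraph V where
  Adj a b := G.Adj b a
  len a b := G.len b a

end WDigraph

/-- The truncated exponential distribution on `[0, Δ·ln n)` with density
`p(x) = (n/(n−1))·(1/Δ)·e^{−x/Δ}`. -/
noncomputable def truncExp (n : ℕ) (Δ : ℝ) : Measure ℝ :=
  (volume.restrict (Set.Ico 0 (Δ * Real.log n))).withDensity
    fun x => ENNReal.ofReal (((n : ℝ) / ((n : ℝ) - 1)) * (1 / Δ) * Real.exp (-x / Δ))

/-- Extend a finite tuple of radii to a sequence (values beyond `N` are irrelevant). -/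
def extRadii {N : ℕ} (ω : Fin N → ℝ) : ℕ → ℝ :=
  fun i => if h : i < N then ω ⟨i, h⟩ else 0

open Classical in
/-- The first element of the list `Q` that does not belong to `S`. -/
noncomputable def firstNotIn {V : Type} (Q : List V) (S : Set V) : Option V :=
  Q.find? fun a => decide (a ∉ S)

/-- The set of vertices marked before step `i` of one stage of
`Path-Quasipartition`: at each step, the center is the first vertex of the traversal
order `Q.reverse` that is not yet marked, and the ball of the next random radius
around it is marked. -/
noncomputable def pqM {V : Type} (G : WDigraph V) (Q : List V) (r : ℕ → ℝ) : ℕ → Set V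
  | 0 => ∅
  | i + 1 =>
      pqM G Q r i ∪
        (match firstNotIn Q.reverse (pqM G Q r i) with
          | none => ∅
          | some a => G.ball a (r i))

/-- The cluster `B_{i+1}` created at step `i` of one stage of `Path-Quasipartition`:
the ball around the current center minus all previously created clusters. -/
noncomputable def pqB {V : Type} (G : WDigraph V) (Q : List V) (r : ℕ → ℝ) (i : ℕ) :
    Set V :=
  (match firstNotIn Q.reverse (pqM G Q r i) with
    | none => ∅
    | some a => G.ball a (r i)) \ pqM G Q r i

/-- The cutset `C = F ∪ F'` produced by `Path-Quasipartition (G, Q, Δ)` from the two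
sequences of radii `r` (Step 1, balls away from `Q`, traversing `Q` backwards) and `r'`
(Step 2, balls towards `Q` in the reverse digraph, traversing `Q` forward):
`F` consists of all edges leaving some `B_i`, and `F'` of all edges entering some `B'_i`. -/
noncomputable def pqC {V : Type} (G : WDigraph V) (Q : List V) (r r' : ℕ → ℝ) :
    Set (V × V) :=
  (⋃ i : ℕ, {e : V × V | G.Adj e.1 e.2 ∧ e.1 ∈ pqB G Q r i ∧ e.2 ∉ pqB G Q r i}) ∪
  (⋃ i : ℕ, {e : V × V | G.Adj e.1 e.2 ∧ e.2 ∈ pqB G.rev Q.reverse r' i ∧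
      e.1 ∉ pqB G.rev Q.reverse r' i})

/-- The randomness of `Path-Quasipartition`: two independent sequences of `N` radii,
each i.i.d. with the truncated exponential distribution. -/
noncomputable def pqMeasure (N : ℕ) (Δ : ℝ) : Measure ((Fin N → ℝ) × (Fin N → ℝ)) :=
  (Measure.pi fun _ => truncExp N Δ).prod (Measure.pi fun _ => truncExp N Δ)

/-! ### Auxiliary lemmas -/

namespace PQAux

open WDigraph List

variable {V : Type} {G : WDigraph V}

lemma walkLen_nil : G.walkLen ([] : List V) = 0 := rfl

lemma walkLen_singleton (a : V) : G.walkLen [a] = 0 := rfl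

lemma walkLen_cons_cons (a b : V) (t : List V) :
    G.walkLen (a :: b :: t) = G.len a b + G.walkLen (b :: t) := by
  simp [WDigraph.walkLen]

lemma dist_le_walkLen {u v : V} {p : List V} (h : G.IsWalk u v p) :
    G.dist u v ≤ (G.walkLen p : ℝ≥0∞) :=
  iInf₂_le p h

lemma isWalk_singleton (u : V) : G.IsWalk u u [u] :=
  ⟨List.isChain_singleton u, rfl, rfl⟩

lemma dist_self_le (u : V) : G.dist u u ≤ 0 := by
  simpa [walkLen_singleton] using dist_le_walkLen (G := G) (isWalk_singleton u)

lemma walkLen_append {p : List V} {z : V} (hp : p.getLast? = some z) (q : List V) :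
    G.walkLen (p ++ q) = G.walkLen p + G.walkLen (z :: q) := by
  induction p with
  | nil => simp at hp
  | cons a t ih =>
    cases t with
    | nil =>
      simp only [List.getLast?_singleton, Option.some.injEq] at hp
      subst hp
      simp [walkLen_singleton]
    | cons b t' =>
      have hp' : (b :: t').getLast? = some z := by rwa [List.getLast?_cons_cons] at hp
      have h2 := ih hp'
      simp only [List.cons_append] at h2 ⊢
      rw [walkLen_cons_cons, walkLen_cons_cons, h2, add_assoc]

lemma isWalk_append {x z y : V} {p q : List V} (hp : G.IsWalk x z p) (hq : G.IsWalk z y q) :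
    G.IsWalk x y (p ++ q.tail) ∧ G.walkLen (p ++ q.tail) = G.walkLen p + G.walkLen q := by
  obtain ⟨cp, hph, hpl⟩ := hp
  obtain ⟨cq, hqh, hql⟩ := hq
  obtain ⟨q', rfl⟩ : ∃ q', q = z :: q' := by
    cases q with
    | nil => simp at hqh
    | cons h t =>
      simp only [List.head?_cons, Option.some.injEq] at hqh
      exact ⟨t, by rw [hqh]⟩
  have hcq' : q'.Chain' G.Adj := (List.isChain_cons.mp cq).2
  have hjunc : ∀ b ∈ q'.head?, G.Adj z b := (List.isChain_cons.mp cq).1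
  have hchain : (p ++ q').Chain' G.Adj := by
    refine List.isChain_append.mpr ⟨cp, hcq', fun a ha b hb => ?_⟩
    rw [hpl] at ha
    simp only [Option.mem_def, Option.some.injEq] at ha
    subst ha
    exact hjunc b hb
  have hlen : G.walkLen (p ++ q') = G.walkLen p + G.walkLen (z :: q') := walkLen_append hpl q'
  have hpne : p ≠ [] := by rintro rfl; simp at hph
  refine ⟨⟨hchain, ?_, ?_⟩, by simpa using hlen⟩
  · cases p with
    | nil => exact absurd rfl hpne
    | cons a t => simpa using hph
  · cases q' with
    | nil =>
      simp only [List.getLast?_singleton, Option.some.injEq] at hql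
      subst hql
      simpa using hpl
    | cons c t' =>
      rw [List.getLast?_cons_cons] at hql
      rw [List.tail_cons, List.getLast?_append, hql]
      rfl

lemma dist_triangle (G : WDigraph V) (x z y : V) :
    G.dist x y ≤ G.dist x z + G.dist z y := by
  have h1 : G.dist x z + G.dist z y =
      ⨅ (p : List V) (_ : G.IsWalk x z p) (q : List V) (_ : G.IsWalk z y q),
        ((G.walkLen p : ℝ≥0∞) + (G.walkLen q : ℝ≥0∞)) := by
    rw [WDigraph.dist, WDigraph.dist, ENNReal.iInf_add]
    refine iInf_congr fun p => ?_
    rw [ENNReal.iInf_add]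
    refine iInf_congr fun hp => ?_
    rw [ENNReal.add_iInf]
    refine iInf_congr fun q => ?_
    rw [ENNReal.add_iInf]
  rw [h1]
  refine le_iInf fun p => le_iInf fun hp => le_iInf fun q => le_iInf fun hq => ?_
  obtain ⟨hw, hlen⟩ := isWalk_append hp hq
  calc G.dist x y ≤ (G.walkLen (p ++ q.tail) : ℝ≥0∞) := dist_le_walkLen hw
    _ = _ := by rw [hlen]; push_cast; ring

lemma edges_suffix (l m : List V) :
    (m.zip m.tail) <:+ ((l ++ m).zip (l ++ m).tail) := by
  induction l with
  | nil => exact List.suffix_refl _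
  | cons a l ih =>
    refine ih.trans ?_
    show ((l ++ m).zip (l ++ m).tail) <:+ ((a :: (l ++ m)).zip (a :: (l ++ m)).tail)
    cases h : (l ++ m) with
    | nil => simp
    | cons b t =>
      rw [show (a :: (b :: t)).zip (a :: (b :: t)).tail
            = (a, b) :: ((b :: t).zip (b :: t).tail) from rfl]
      exact List.suffix_cons _ _

lemma edges_prefix (s l' : List V) :
    (s.zip s.tail) <+: ((s ++ l').zip (s ++ l').tail) := by
  induction s with
  | nil => simp
  | cons a t ih =>
    cases t with
    | nil => simp
    | cons b t' =>
      rw [show ((a :: b :: t') ++ l').zip ((a :: b :: t') ++ l').tail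
            = (a, b) :: (((b :: t') ++ l').zip ((b :: t') ++ l').tail) from rfl,
        show (a :: b :: t').zip (a :: b :: t').tail
            = (a, b) :: ((b :: t').zip (b :: t').tail) from rfl]
      exact (List.cons_prefix_cons).mpr ⟨rfl, ih⟩

lemma walkLen_le_of_infix {s m : List V} (h : s <:+: m) :
    G.walkLen s ≤ G.walkLen m := by
  obtain ⟨l, l', rfl⟩ := h
  have h1 : (s.zip s.tail) <+ ((l ++ (s ++ l')).zip (l ++ (s ++ l')).tail) :=
    (edges_prefix s l').sublist.trans (edges_suffix l (s ++ l')).sublist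
  rw [← List.append_assoc] at h1
  exact List.Sublist.sum_le_sum (h1.map _) (fun a _ => zero_le)

lemma dist_le_of_split {m t₁ t₂ t₃ : List V} {u v : V} (hc : m.Chain' G.Adj)
    (h : m = t₁ ++ u :: (t₂ ++ v :: t₃)) :
    G.dist u v ≤ (G.walkLen m : ℝ≥0∞) := by
  have hinf : (u :: (t₂ ++ [v])) <:+: m := ⟨t₁, t₃, by simp [h]⟩
  have hw : G.IsWalk u v (u :: (t₂ ++ [v])) :=
    ⟨hc.infix hinf, rfl, by
      rw [show u :: (t₂ ++ [v]) = (u :: t₂) ++ [v] from rfl]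
      exact List.getLast?_concat⟩
  calc G.dist u v ≤ (G.walkLen (u :: (t₂ ++ [v])) : ℝ≥0∞) := dist_le_walkLen hw
    _ ≤ (G.walkLen m : ℝ≥0∞) := by
        exact_mod_cast walkLen_le_of_infix hinf

lemma walkLen_concat (l : List V) (a : V) :
    G.walkLen (l ++ [a]) = G.walkLen l + (l.getLast?.elim 0 fun b => G.len b a) := by
  induction l with
  | nil => simp [walkLen_singleton, walkLen_nil]
  | cons x t ih =>
    cases t with
    | nil =>
      show G.walkLen [x, a] = _
      rw [walkLen_cons_cons]
      simp [walkLen_singleton]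
    | cons y t' =>
      rw [show ((x :: y :: t') ++ [a]) = x :: y :: (t' ++ [a]) from rfl,
        walkLen_cons_cons, walkLen_cons_cons,
        show (y :: (t' ++ [a])) = (y :: t') ++ [a] from rfl, ih,
        List.getLast?_cons_cons, add_assoc]

lemma walkLen_reverse (p : List V) : G.walkLen p.reverse = G.rev.walkLen p := by
  induction p with
  | nil => rfl
  | cons a t ih =>
    rw [List.reverse_cons, walkLen_concat, ih, List.getLast?_reverse]
    cases t with
    | nil => simp [walkLen_singleton, walkLen_nil]
    | cons b t' =>
      rw [walkLen_cons_cons (G := G.rev)]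
      show G.rev.walkLen (b :: t') + G.len b a = G.rev.len a b + G.rev.walkLen (b :: t')
      rw [show G.rev.len a b = G.len b a from rfl, add_comm]

lemma isWalk_reverse {u v : V} {p : List V} (h : G.rev.IsWalk u v p) :
    G.IsWalk v u p.reverse := by
  obtain ⟨hc, hh, hl⟩ := h
  refine ⟨List.isChain_reverse.mpr hc, by simpa using hl, by simpa using hh⟩

lemma dist_rev_le (u v : V) : G.dist v u ≤ G.rev.dist u v := by
  refine le_iInf₂ fun p hp => ?_
  calc G.dist v u ≤ (G.walkLen p.reverse : ℝ≥0∞) := dist_le_walkLen (isWalk_reverse hp)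
    _ = _ := by rw [walkLen_reverse]

/-! ### Lemmas about the procedure -/

variable {Q : List V} {r : ℕ → ℝ}

lemma pqM_succ (i : ℕ) :
    pqM G Q r (i + 1) = pqM G Q r i ∪
      (match firstNotIn Q.reverse (pqM G Q r i) with
        | none => ∅
        | some a => G.ball a (r i)) := rfl

lemma pqM_zero : pqM G Q r 0 = ∅ := rfl

lemma pqM_subset_succ (i : ℕ) : pqM G Q r i ⊆ pqM G Q r (i + 1) := by
  rw [pqM_succ]; exact Set.subset_union_left

lemma pqB_eq (i : ℕ) : pqB G Q r i = pqM G Q r (i + 1) \ pqM G Q r i := by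
  rw [pqM_succ, Set.union_diff_left]; rfl

lemma firstNotIn_spec {S : Set V} {T : List V} {a : V} (h : firstNotIn T S = some a) :
    a ∈ T ∧ a ∉ S ∧ ∃ t₁ t₂, T = t₁ ++ a :: t₂ ∧ ∀ x ∈ t₁, x ∈ S := by
  rw [firstNotIn, List.find?_eq_some_iff_append] at h
  obtain ⟨hpa, t₁, t₂, rfl, hall⟩ := h
  refine ⟨by simp, by simpa using hpa, t₁, t₂, rfl, fun x hx => ?_⟩
  have := hall x hx
  simpa using this

lemma exists_firstNotIn {S : Set V} {T : List V} {b : V} (hb : b ∈ T) (hbS : b ∉ S) :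
    ∃ a, firstNotIn T S = some a := by
  rw [← Option.isSome_iff_exists, firstNotIn, List.find?_isSome]
  exact ⟨b, hb, by simpa using hbS⟩

lemma center_mem_succ {i : ℕ} {a : V}
    (h : firstNotIn Q.reverse (pqM G Q r i) = some a) :
    a ∈ pqM G Q r (i + 1) := by
  rw [pqM_succ, h]
  refine Set.mem_union_right _ ?_
  show G.dist a a ≤ ENNReal.ofReal (r i)
  exact le_trans (dist_self_le a) zero_le

lemma all_marked (hnd : Q.Nodup) {w : V} (hw : w ∈ Q) :
    w ∈ pqM G Q r Q.length := by
  classical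
  by_contra hcon
  have claim : ∀ j, w ∉ pqM G Q r j →
      j ≤ (Q.reverse.toFinset.filter (· ∈ pqM G Q r j)).card := by
    intro j
    induction j with
    | zero => intro _; exact Nat.zero_le _
    | succ j ih =>
      intro hj1
      have hj : w ∉ pqM G Q r j := fun h => hj1 (pqM_subset_succ j h)
      obtain ⟨a, ha⟩ := exists_firstNotIn (List.mem_reverse.mpr hw) hj
      obtain ⟨haT, haS, -⟩ := firstNotIn_spec ha
      have ha1 : a ∈ pqM G Q r (j + 1) := center_mem_succ ha
      have hsub : Q.reverse.toFinset.filter (· ∈ pqM G Q r j) ⊆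
          Q.reverse.toFinset.filter (· ∈ pqM G Q r (j + 1)) := by
        intro x hx
        simp only [Finset.mem_filter] at hx ⊢
        exact ⟨hx.1, pqM_subset_succ j hx.2⟩
      have hss : Q.reverse.toFinset.filter (· ∈ pqM G Q r j) ⊂
          Q.reverse.toFinset.filter (· ∈ pqM G Q r (j + 1)) := by
        refine (Finset.ssubset_iff_of_subset hsub).mpr ⟨a, ?_, ?_⟩
        · simp only [Finset.mem_filter]
          exact ⟨by simpa using haT, ha1⟩
        · simp only [Finset.mem_filter, not_and]
          intro _
          exact haS
      have hcard := Finset.card_lt_card hss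
      have := ih hj
      omega
  have h1 := claim Q.length hcon
  have hwf : w ∈ Q.reverse.toFinset := by simpa using hw
  have hss : Q.reverse.toFinset.filter (· ∈ pqM G Q r Q.length) ⊂ Q.reverse.toFinset := by
    refine (Finset.ssubset_iff_of_subset (Finset.filter_subset _ _)).mpr ⟨w, hwf, ?_⟩
    simp only [Finset.mem_filter, not_and]
    intro _
    exact hcon
  have h2 := Finset.card_lt_card hss
  rw [List.toFinset_card_of_nodup (by simpa using hnd), List.length_reverse] at h2
  omega

lemma exists_pqB {w : V} {m : ℕ} (h : w ∈ pqM G Q r m) : ∃ i, w ∈ pqB G Q r i := by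
  induction m with
  | zero => rw [pqM_zero] at h; exact absurd h (Set.notMem_empty w)
  | succ m ih =>
    by_cases hm : w ∈ pqM G Q r m
    · exact ih hm
    · exact ⟨m, by rw [pqB_eq]; exact ⟨h, hm⟩⟩

lemma pqB_spec {w : V} {i : ℕ} (h : w ∈ pqB G Q r i) :
    ∃ a, firstNotIn Q.reverse (pqM G Q r i) = some a ∧
      w ∈ G.ball a (r i) ∧ w ∉ pqM G Q r i := by
  rw [pqB] at h
  cases hfa : firstNotIn Q.reverse (pqM G Q r i) with
  | none => rw [hfa] at h; simp at h
  | some a => rw [hfa] at h; exact ⟨a, rfl, h.1, h.2⟩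

lemma pqB_subset_ball {i : ℕ} {a : V}
    (hfa : firstNotIn Q.reverse (pqM G Q r i) = some a) :
    pqB G Q r i ⊆ G.ball a (r i) := by
  intro x hx
  rw [pqB, hfa] at hx
  exact hx.1

lemma mem_ordered {i : ℕ} {a w : V}
    (hfa : firstNotIn Q.reverse (pqM G Q r i) = some a)
    (hw : w ∈ Q) (hwm : w ∉ pqM G Q r i) :
    w = a ∨ ∃ t₁ t₂ t₃, Q = t₁ ++ w :: (t₂ ++ a :: t₃) := by
  obtain ⟨-, -, t₁, t₂, hsplit, hall⟩ := firstNotIn_spec hfa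
  have hwT : w ∈ Q.reverse := List.mem_reverse.mpr hw
  rw [hsplit] at hwT
  rcases List.mem_append.mp hwT with h1 | h2
  · exact absurd (hall w h1) hwm
  rcases List.mem_cons.mp h2 with h3 | h4
  · exact Or.inl h3
  · obtain ⟨c₁, c₂, rfl⟩ := List.append_of_mem h4
    right
    refine ⟨c₂.reverse, c₁.reverse, t₁.reverse, ?_⟩
    rw [← List.reverse_reverse Q, hsplit]
    simp

/-! ### Propagation along a cut-avoiding walk -/

lemma prop_forward (B : Set V) (F : Set (V × V))
    (hBF : ∀ u u' : V, G.Adj u u' → u ∈ B → u' ∉ B → (u, u') ∈ F) :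
    ∀ p : List V, p.Chain' G.Adj → (∀ e ∈ p.zip p.tail, e ∉ F) →
      ∀ w ∈ p, w ∈ B → ∀ y, p.getLast? = some y → y ∈ B := by
  intro p
  induction p with
  | nil => intro _ _ w hw; exact absurd hw (List.not_mem_nil)
  | cons a t ih =>
    intro hc he w hw hwB y hy
    cases t with
    | nil =>
      simp only [List.mem_singleton] at hw
      simp only [List.getLast?_singleton, Option.some.injEq] at hy
      subst hw; subst hy; exact hwB
    | cons b t' =>
      have hadj := (List.isChain_cons_cons.mp hc).1
      have hc' := (List.isChain_cons_cons.mp hc).2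
      have he0 : (a, b) ∉ F := he (a, b) (by
        rw [show (a :: b :: t').zip (a :: b :: t').tail
             = (a, b) :: ((b :: t').zip (b :: t').tail) from rfl]
        exact List.mem_cons_self)
      have he' : ∀ e ∈ (b :: t').zip (b :: t').tail, e ∉ F := fun e hme =>
        he e (by
          rw [show (a :: b :: t').zip (a :: b :: t').tail
               = (a, b) :: ((b :: t').zip (b :: t').tail) from rfl]
          exact List.mem_cons_of_mem _ hme)
      have hy' : (b :: t').getLast? = some y := by rwa [List.getLast?_cons_cons] at hy
      rcases List.mem_cons.mp hw with rfl | hwt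
      · have hbB : b ∈ B := by
          by_contra hbB
          exact he0 (hBF w b hadj hwB hbB)
        exact ih hc' he' b List.mem_cons_self hbB y hy'
      · exact ih hc' he' w hwt hwB y hy'

lemma prop_backward (B : Set V) (F : Set (V × V))
    (hBF : ∀ u u' : V, G.Adj u u' → u' ∈ B → u ∉ B → (u, u') ∈ F) :
    ∀ p : List V, p.Chain' G.Adj → (∀ e ∈ p.zip p.tail, e ∉ F) →
      ∀ w ∈ p, w ∈ B → ∀ x, p.head? = some x → x ∈ B := by
  intro p
  induction p with
  | nil => intro _ _ w hw; exact absurd hw (List.not_mem_nil)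
  | cons a t ih =>
    intro hc he w hw hwB x hx
    have hx' : a = x := by simpa using hx
    subst hx'
    rcases List.mem_cons.mp hw with rfl | hwt
    · exact hwB
    · cases t with
      | nil => exact absurd hwt (List.not_mem_nil)
      | cons b t' =>
        have hadj := (List.isChain_cons_cons.mp hc).1
        have he' : ∀ e ∈ (b :: t').zip (b :: t').tail, e ∉ F := fun e hme =>
          he e (by
            rw [show (a :: b :: t').zip (a :: b :: t').tail
                 = (a, b) :: ((b :: t').zip (b :: t').tail) from rfl]
            exact List.mem_cons_of_mem _ hme)
        have hb : b ∈ B := ih (List.isChain_cons_cons.mp hc).2 he' w hwt hwB b rfl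
        by_contra haB
        refine he (a, b) ?_ (hBF a b hadj hb haB)
        rw [show (a :: b :: t').zip (a :: b :: t').tail
             = (a, b) :: ((b :: t').zip (b :: t').tail) from rfl]
        exact List.mem_cons_self

/-! ### The deterministic key lemma -/

lemma deterministic_key {V : Type} (G : WDigraph V) {Δ L : ℝ}
    (Q : List V) (hnd : Q.Nodup) (hchain : Q.Chain' G.Adj)
    (hlenQ : (G.walkLen Q : ℝ≥0∞) ≤ ENNReal.ofReal Δ)
    (r r' : ℕ → ℝ) (hr : ∀ i, r i ≤ L) (hr' : ∀ i, r' i ≤ L)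
    {x y : V} (p : List V) (hp : G.IsWalk x y p)
    (havoid : ∀ e ∈ p.zip p.tail, e ∉ pqC G Q r r')
    {w : V} (hwp : w ∈ p) (hwQ : w ∈ Q) :
    G.dist x y ≤ ENNReal.ofReal L + ENNReal.ofReal Δ +
      (ENNReal.ofReal Δ + ENNReal.ofReal L) := by
  -- Step 1: forward balls
  have hw1 : w ∈ pqM G Q r Q.length := all_marked hnd hwQ
  obtain ⟨i, hwB⟩ := exists_pqB hw1
  obtain ⟨a, hfa, hwball, hwm⟩ := pqB_spec hwB
  have hFcut : ∀ u u' : V, G.Adj u u' → u ∈ pqB G Q r i → u' ∉ pqB G Q r i →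
      (u, u') ∈ pqC G Q r r' := fun u u' h1 h2 h3 =>
    Or.inl (Set.mem_iUnion.mpr ⟨i, h1, h2, h3⟩)
  have hy : y ∈ pqB G Q r i :=
    prop_forward _ _ hFcut p hp.1 havoid w hwp hwB y hp.2.2
  have hay : G.dist a y ≤ ENNReal.ofReal L := by
    have := pqB_subset_ball hfa hy
    exact le_trans this (ENNReal.ofReal_le_ofReal (hr i))
  have hwa : G.dist w a ≤ ENNReal.ofReal Δ := by
    rcases mem_ordered hfa hwQ hwm with rfl | ⟨t₁, t₂, t₃, hsplit⟩
    · exact le_trans (dist_self_le w) zero_le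
    · exact le_trans (dist_le_of_split hchain hsplit) hlenQ
  -- Step 2: backward balls (reverse digraph, reverse path)
  have hw2Q : w ∈ Q.reverse := List.mem_reverse.mpr hwQ
  have hw2 : w ∈ pqM G.rev Q.reverse r' Q.reverse.length :=
    all_marked (by simpa using hnd) hw2Q
  obtain ⟨j, hwB'⟩ := exists_pqB hw2
  obtain ⟨a', hfa', hwball', hwm'⟩ := pqB_spec hwB'
  have hFcut' : ∀ u u' : V, G.Adj u u' → u' ∈ pqB G.rev Q.reverse r' j →
      u ∉ pqB G.rev Q.reverse r' j → (u, u') ∈ pqC G Q r r' := fun u u' h1 h2 h3 =>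
    Or.inr (Set.mem_iUnion.mpr ⟨j, h1, h2, h3⟩)
  have hx : x ∈ pqB G.rev Q.reverse r' j :=
    prop_backward _ _ hFcut' p hp.1 havoid w hwp hwB' x hp.2.1
  have hxa' : G.dist x a' ≤ ENNReal.ofReal L := by
    have h1 : G.rev.dist a' x ≤ ENNReal.ofReal (r' j) := pqB_subset_ball hfa' hx
    exact le_trans (le_trans (dist_rev_le a' x) h1) (ENNReal.ofReal_le_ofReal (hr' j))
  have ha'w : G.dist a' w ≤ ENNReal.ofReal Δ := by
    rcases mem_ordered hfa' hw2Q hwm' with rfl | ⟨t₁, t₂, t₃, hsplit⟩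
    · exact le_trans (dist_self_le _) zero_le
    · have hQs : Q = t₃.reverse ++ a' :: (t₂.reverse ++ w :: t₁.reverse) := by
        rw [← List.reverse_reverse Q, hsplit]
        simp
      exact le_trans (dist_le_of_split hchain hQs) hlenQ
  -- assemble
  calc G.dist x y ≤ G.dist x a' + G.dist a' y := dist_triangle G x a' y
    _ ≤ G.dist x a' + (G.dist a' w + G.dist w y) :=
        add_le_add le_rfl (dist_triangle G a' w y)
    _ ≤ G.dist x a' + (G.dist a' w + (G.dist w a + G.dist a y)) :=
        add_le_add le_rfl (add_le_add le_rfl (dist_triangle G w a y))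
    _ ≤ ENNReal.ofReal L + (ENNReal.ofReal Δ + (ENNReal.ofReal Δ + ENNReal.ofReal L)) := by
        exact add_le_add hxa' (add_le_add ha'w (add_le_add hwa hay))
    _ = _ := by ring

/-! ### Measure-theoretic lemmas -/

lemma truncExp_compl_null (n : ℕ) (Δ : ℝ) :
    truncExp n Δ (Set.Ico (0 : ℝ) (Δ * Real.log n))ᶜ = 0 := by
  rw [truncExp, withDensity_apply _ measurableSet_Ico.compl,
    Measure.restrict_restrict measurableSet_Ico.compl]
  simp

lemma truncExp_isFiniteMeasure (n : ℕ) {Δ : ℝ} (hΔ : 0 < Δ) :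
    IsFiniteMeasure (truncExp n Δ) := by
  constructor
  rw [truncExp, withDensity_apply _ MeasurableSet.univ, Measure.restrict_univ]
  set c : ℝ := ((n : ℝ) / ((n : ℝ) - 1)) * (1 / Δ) with hc
  calc ∫⁻ x, ENNReal.ofReal (c * Real.exp (-x / Δ))
        ∂(volume.restrict (Set.Ico 0 (Δ * Real.log n)))
      ≤ ∫⁻ _, ENNReal.ofReal |c| ∂(volume.restrict (Set.Ico 0 (Δ * Real.log n))) := by
        refine lintegral_mono_ae ?_
        filter_upwards [ae_restrict_mem measurableSet_Ico] with t ht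
        have ht0 : (0 : ℝ) ≤ t := ht.1
        have hexp : Real.exp (-t / Δ) ≤ 1 := by
          rw [Real.exp_le_one_iff]
          exact div_nonpos_iff.mpr (Or.inr ⟨neg_nonpos.mpr ht0, hΔ.le⟩)
        refine ENNReal.ofReal_le_ofReal ?_
        calc c * Real.exp (-t / Δ) ≤ |c| * Real.exp (-t / Δ) :=
              mul_le_mul_of_nonneg_right (le_abs_self c) (Real.exp_nonneg _)
          _ ≤ |c| * 1 := mul_le_mul_of_nonneg_left hexp (abs_nonneg c)
          _ = |c| := mul_one _
    _ = ENNReal.ofReal |c| * volume (Set.Ico (0 : ℝ) (Δ * Real.log n)) := by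
        rw [lintegral_const, Measure.restrict_apply MeasurableSet.univ, Set.univ_inter]
    _ < ⊤ := by
        rw [Real.volume_Ico]
        exact ENNReal.mul_lt_top ENNReal.ofReal_lt_top ENNReal.ofReal_lt_top

end PQAux

/-- **Boundedness near the path for `Path-Quasipartition` (Lemma 4.1(2)).**
There is a universal constant `c₀` such that for every digraph `H` on `n ≥ 2` vertices
with nonnegative edge lengths, every `Δ > 0` and every shortest path `Q` of length at
most `Δ`, with probability 1 the following holds for the random cutset `C` of
`Path-Quasipartition (H, Q, Δ)`: whenever there is a directed path from `x` to `y` in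
`H∖C` sharing a vertex with `Q`, we have `d_H(x,y) ≤ c₀·Δ·log n`. -/
theorem path_quasipartition_bounded_near_path :
    ∃ c₀ : ℝ, 0 < c₀ ∧
      ∀ (V : Type) [Fintype V] (G : WDigraph V), 2 ≤ Fintype.card V →
      ∀ (Δ : ℝ), 0 < Δ →
      ∀ (Q : List V) (hQ : Q ≠ []), Q.Nodup →
        G.IsWalk (Q.head hQ) (Q.getLast hQ) Q →
        (G.walkLen Q : ℝ≥0∞) = G.dist (Q.head hQ) (Q.getLast hQ) →
        (G.walkLen Q : ℝ) ≤ Δ →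
        pqMeasure (Fintype.card V) Δ
            {ω | ¬ ∀ x y : V,
              (∃ p : List V, G.IsWalk x y p ∧
                (∀ e ∈ p.zip p.tail, e ∉ pqC G Q (extRadii ω.1) (extRadii ω.2)) ∧
                ∃ w ∈ p, w ∈ Q) →
              G.dist x y ≤ ENNReal.ofReal (c₀ * Δ * Real.log (Fintype.card V))}
          = 0 := by
  classical
  refine ⟨10, by norm_num, ?_⟩
  intro V _ G hcard Δ hΔ Q hQ hnd hwalk _hsp hlen
  set N := Fintype.card V with hN
  set L : ℝ := Δ * Real.log N with hL
  have hn2 : (2 : ℝ) ≤ (N : ℝ) := by exact_mod_cast hcard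
  have hlog2 : Real.log 2 ≤ Real.log N := Real.log_le_log (by norm_num) hn2
  have hlog2pos : (0 : ℝ) < Real.log 2 := Real.log_pos (by norm_num)
  have hlogpos : (0 : ℝ) < Real.log N := lt_of_lt_of_le hlog2pos hlog2
  have hLpos : 0 < L := mul_pos hΔ hlogpos
  have hlenQ : (G.walkLen Q : ℝ≥0∞) ≤ ENNReal.ofReal Δ := by
    rw [← ENNReal.ofReal_coe_nnreal]
    exact ENNReal.ofReal_le_ofReal hlen
  set I : Set ℝ := Set.Ico (0 : ℝ) L with hI
  -- the deterministic statement holds whenever all radii lie in `I`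
  have key : ∀ ω : (Fin N → ℝ) × (Fin N → ℝ),
      (∀ i : Fin N, ω.1 i ∈ I) → (∀ i : Fin N, ω.2 i ∈ I) →
      ∀ x y : V,
        (∃ p : List V, G.IsWalk x y p ∧
          (∀ e ∈ p.zip p.tail, e ∉ pqC G Q (extRadii ω.1) (extRadii ω.2)) ∧
          ∃ w ∈ p, w ∈ Q) →
        G.dist x y ≤ ENNReal.ofReal (10 * Δ * Real.log N) := by
    intro ω h1 h2 x y ⟨p, hp, havoid, w, hwp, hwQ⟩
    have hrle : ∀ i, extRadii ω.1 i ≤ L := by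
      intro i
      rw [extRadii]
      split
      · exact (h1 _).2.le
      · exact hLpos.le
    have hrle' : ∀ i, extRadii ω.2 i ≤ L := by
      intro i
      rw [extRadii]
      split
      · exact (h2 _).2.le
      · exact hLpos.le
    have hb := PQAux.deterministic_key G Q hnd hwalk.1 hlenQ
      (extRadii ω.1) (extRadii ω.2) hrle hrle' p hp havoid hwp hwQ
    refine le_trans hb ?_
    have e1 : ENNReal.ofReal L + ENNReal.ofReal Δ + (ENNReal.ofReal Δ + ENNReal.ofReal L)
        = ENNReal.ofReal (L + Δ + (Δ + L)) := by
      rw [ENNReal.ofReal_add (by positivity) (by positivity),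
        ENNReal.ofReal_add hΔ.le hLpos.le,
        ENNReal.ofReal_add (by positivity) (by positivity)]
    rw [e1]
    refine ENNReal.ofReal_le_ofReal ?_
    have hΔle : Δ ≤ 2 * Δ * Real.log N := by
      nlinarith [Real.log_two_gt_d9, hΔ]
    rw [hL]
    nlinarith [hΔ, hlogpos]
  -- the bad event is contained in the event that some radius is out of range
  haveI : IsFiniteMeasure (truncExp N Δ) := PQAux.truncExp_isFiniteMeasure N hΔ
  set A : Set (Fin N → ℝ) := {f | ∀ i : Fin N, f i ∈ I} with hA
  have hAnull : (Measure.pi fun _ : Fin N => truncExp N Δ) Aᶜ = 0 := by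
    have hsub : Aᶜ ⊆ ⋃ i : Fin N, Function.eval i ⁻¹' Iᶜ := by
      intro f hf
      simp only [hA, Set.mem_compl_iff, Set.mem_setOf_eq, not_forall] at hf
      obtain ⟨i, hi⟩ := hf
      exact Set.mem_iUnion.mpr ⟨i, hi⟩
    refine measure_mono_null hsub (measure_iUnion_null fun i => ?_)
    exact Measure.pi_eval_preimage_null _ (PQAux.truncExp_compl_null N Δ)
  have hnull2 : pqMeasure N Δ
      ((Aᶜ ×ˢ (Set.univ : Set (Fin N → ℝ))) ∪ ((Set.univ : Set (Fin N → ℝ)) ×ˢ Aᶜ)) = 0 := by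
    rw [pqMeasure]
    refine measure_union_null ?_ ?_
    · rw [Measure.prod_prod, hAnull, zero_mul]
    · rw [Measure.prod_prod, hAnull, mul_zero]
  refine measure_mono_null ?_ hnull2
  intro ω hω
  by_cases h1 : ω.1 ∈ A
  · by_cases h2 : ω.2 ∈ A
    · exact absurd (key ω h1 h2) hω
    · exact Or.inr ⟨Set.mem_univ _, h2⟩
  · exact Or.inl ⟨h1, Set.mem_univ _⟩
end

section
/- Let G be a digraph with nonnegative edge lengths, let Δ > 0 and β ≥ 0, and let F be a random subset of E(G) such that for every edge (u,v) ∈ E(G), Pr[(u,v) ∈ F] ≤ β·d_G(u,v)/Δ. Let R be the (random) quasipartition induced by F. Then for all u′,v′ ∈ V(G) such that v′ is reachable from u′ in G, Pr[(u′,v′) ∉ R] ≤ β·d_G(u′,v′)/Δ. -/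
open scoped ENNReal NNReal
open MeasureTheory

namespace WDigraph

variable {V : Type}

lemma adj_of_mem_zip {G : WDigraph V} : ∀ {p : List V}, p.Chain' G.Adj →
    ∀ e ∈ p.zip p.tail, G.Adj e.1 e.2 := by
  intro p
  induction p with
  | nil => intro _ e he; simp at he
  | cons a l ih =>
    intro hc e he
    cases l with
    | nil => simp at he
    | cons b t =>
      simp only [List.Chain', List.isChain_cons_cons] at hc
      have hz : (a :: b :: t).zip (a :: b :: t).tail
          = (a, b) :: (b :: t).zip (b :: t).tail := rfl
      rw [hz, List.mem_cons] at he
      rcases he with rfl | he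
      · exact hc.1
      · exact ih hc.2 e he

lemma dist_le_len {G : WDigraph V} {u v : V} (h : G.Adj u v) :
    G.dist u v ≤ (G.len u v : ℝ≥0∞) := by
  have hw : G.IsWalk u v [u, v] := by
    refine ⟨?_, rfl, rfl⟩
    simp [List.Chain', List.isChain_cons_cons, h]
  have : G.walkLen [u, v] = G.len u v := by
    simp [walkLen]
  calc G.dist u v ≤ (G.walkLen [u, v] : ℝ≥0∞) := iInf₂_le _ hw
    _ = (G.len u v : ℝ≥0∞) := by rw [this]

end WDigraph

lemma meas_exists_mem_le {Ω : Type} [MeasurableSpace Ω] (μ : MeasureTheory.Measure Ω)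
    {V : Type} (F : Ω → Set (V × V)) :
    ∀ l : List (V × V), μ {ω | ∃ e ∈ l, e ∈ F ω} ≤
      (l.map fun e => μ {ω | e ∈ F ω}).sum := by
  intro l
  induction l with
  | nil => simp
  | cons a t ih =>
    have hsub : {ω | ∃ e ∈ a :: t, e ∈ F ω} ⊆
        {ω | a ∈ F ω} ∪ {ω | ∃ e ∈ t, e ∈ F ω} := by
      rintro ω ⟨e, he, hef⟩
      rcases List.mem_cons.mp he with rfl | he
      · exact Or.inl hef
      · exact Or.inr ⟨e, he, hef⟩
    calc μ {ω | ∃ e ∈ a :: t, e ∈ F ω}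
        ≤ μ ({ω | a ∈ F ω} ∪ {ω | ∃ e ∈ t, e ∈ F ω}) := measure_mono hsub
      _ ≤ μ {ω | a ∈ F ω} + μ {ω | ∃ e ∈ t, e ∈ F ω} := measure_union_le _ _
      _ ≤ μ {ω | a ∈ F ω} + (t.map fun e => μ {ω | e ∈ F ω}).sum := by
          exact add_le_add_right ih _
      _ = ((a :: t).map fun e => μ {ω | e ∈ F ω}).sum := by simp

lemma sum_map_mul_coe {α : Type} (c : ℝ≥0∞) (f : α → ℝ≥0) : ∀ l : List α,
    (l.map fun x => c * (f x : ℝ≥0∞)).sum = c * (((l.map f).sum : ℝ≥0) : ℝ≥0∞) := by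
  intro l
  induction l with
  | nil => simp
  | cons a t ih =>
    simp only [List.map_cons, List.sum_cons, ENNReal.coe_add, mul_add, ih]
/-- **From edge-cutting probabilities to quasipartition probabilities.**
If every edge of `G` is cut by a random cutset `F` with probability at most
`β·d_G(u,v)/Δ`, then for every pair `(u',v')` with `v'` reachable from `u'`, the
quasipartition `R` induced by `F` (i.e. reachability in `G∖F`) fails to relate
`(u',v')` with probability at most `β·d_G(u',v')/Δ`. -/
theorem induced_quasipartition_probability {V : Type} (G : WDigraph V)
    (Δ β : ℝ) (hΔ : 0 < Δ) (hβ : 0 ≤ β)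
    {Ω : Type} [MeasurableSpace Ω] (μ : Measure Ω) [IsProbabilityMeasure μ]
    (F : Ω → Set (V × V)) (hFE : ∀ ω : Ω, ∀ e ∈ F ω, G.Adj e.1 e.2)
    (hcut : ∀ u v : V, G.Adj u v →
      μ {ω | (u, v) ∈ F ω} ≤ ENNReal.ofReal β * G.dist u v / ENNReal.ofReal Δ) :
    ∀ u' v' : V, (∃ p : List V, G.IsWalk u' v' p) →
      μ {ω | ¬ G.ReachAvoiding (F ω) u' v'}
        ≤ ENNReal.ofReal β * G.dist u' v' / ENNReal.ofReal Δ := by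
  intro u' v' hex
  set c : ℝ≥0∞ := ENNReal.ofReal β / ENNReal.ofReal Δ with hc
  have hΔ0 : ENNReal.ofReal Δ ≠ 0 := by
    exact ne_of_gt (ENNReal.ofReal_pos.mpr hΔ)
  have hcne : c ≠ ⊤ :=
    (ENNReal.div_lt_top ENNReal.ofReal_ne_top hΔ0).ne
  -- rewrite the target as c * dist
  have hrw : ∀ d : ℝ≥0∞, ENNReal.ofReal β * d / ENNReal.ofReal Δ = c * d := by
    intro d
    rw [hc, div_eq_mul_inv, div_eq_mul_inv, mul_right_comm]
  rw [hrw]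
  -- key: bound by c * walkLen p for each walk p
  have key : ∀ p : List V, G.IsWalk u' v' p →
      μ {ω | ¬ G.ReachAvoiding (F ω) u' v'} ≤ c * (G.walkLen p : ℝ≥0∞) := by
    intro p hp
    have hsub : {ω | ¬ G.ReachAvoiding (F ω) u' v'} ⊆
        {ω | ∃ e ∈ p.zip p.tail, e ∈ F ω} := by
      intro ω hω
      by_contra h
      exact hω ⟨p, hp, fun e he hef => h ⟨e, he, hef⟩⟩
    calc μ {ω | ¬ G.ReachAvoiding (F ω) u' v'}
        ≤ μ {ω | ∃ e ∈ p.zip p.tail, e ∈ F ω} := measure_mono hsub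
      _ ≤ ((p.zip p.tail).map fun e => μ {ω | e ∈ F ω}).sum :=
          meas_exists_mem_le μ F _
      _ ≤ ((p.zip p.tail).map fun e => c * (G.len e.1 e.2 : ℝ≥0∞)).sum := by
          apply List.sum_le_sum
          intro e' he'
          have hadj : G.Adj e'.1 e'.2 := WDigraph.adj_of_mem_zip hp.1 e' he'
          calc μ {ω | e' ∈ F ω} = μ {ω | (e'.1, e'.2) ∈ F ω} := by simp
            _ ≤ ENNReal.ofReal β * G.dist e'.1 e'.2 / ENNReal.ofReal Δ :=
                hcut e'.1 e'.2 hadj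
            _ = c * G.dist e'.1 e'.2 := hrw _
            _ ≤ c * (G.len e'.1 e'.2 : ℝ≥0∞) :=
                mul_le_mul_right (WDigraph.dist_le_len hadj) c
      _ = c * (G.walkLen p : ℝ≥0∞) := by
          rw [WDigraph.walkLen]
          exact sum_map_mul_coe c (fun e => G.len e.1 e.2) (p.zip p.tail)
  -- combine via the infimum
  have hne : Nonempty {p : List V // G.IsWalk u' v' p} := by
    obtain ⟨p, hp⟩ := hex
    exact ⟨⟨p, hp⟩⟩
  have hdist : G.dist u' v' = ⨅ q : {p : List V // G.IsWalk u' v' p},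
      (G.walkLen q.1 : ℝ≥0∞) := by
    rw [WDigraph.dist, iInf_subtype']
  rw [hdist, ENNReal.mul_iInf (by simp [hcne])]
  exact le_iInf fun q => key q.1 q.2
end
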